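/- arXiv:1310.2872 — 2 statements merged into one kernel-verified Lean document; each statement's English description precedes it below -/
import Mathlib

section
/- Let G be a finite simple graph on vertex set {x_{11}, …, x_{n1}}, let m_1, …, m_n ≥ 2 be integers, and let G_1, …, G_n be connected finite simple graphs with V(G_i) = {x_{i1}, …, x_{im_i}}. Suppose that for every i = 1, …, n the graphs G_i and G_i \ {x_{i1}} are unmixed. Then every maximal independent set of the attachment graph G(G_1, …, G_n) has cardinality α(G_1) + α(G_2) + … + α(G_n); in particular, G(G_1, …, G_n) is unmixed. -/
variable {V : Type*} [DecidableEq V]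

/-- `S` is an independent set of the induced subgraph of `G` on the vertex set `A`. -/
def IsIndepIn (G : SimpleGraph V) (A S : Finset V) : Prop :=
  S ⊆ A ∧ ∀ u ∈ S, ∀ v ∈ S, ¬G.Adj u v

/-- `S` is a maximal independent set of the induced subgraph of `G` on the vertex set `A`. -/
def IsMaxIndepIn (G : SimpleGraph V) (A S : Finset V) : Prop :=
  IsIndepIn G A S ∧ ∀ T, IsIndepIn G A T → S ⊆ T → S = T

/-- The induced subgraph of `G` on `A` is unmixed: all maximal independent sets
have the same cardinality. -/
def UnmixedOn (G : SimpleGraph V) (A : Finset V) : Prop :=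
  ∀ S T, IsMaxIndepIn G A S → IsMaxIndepIn G A T → S.card = T.card

open scoped Classical in
/-- The vertex set `A \ N_G[x]`. -/
noncomputable def delClosedNbhd (G : SimpleGraph V) (A : Finset V) (x : V) : Finset V :=
  A.filter fun y => y ≠ x ∧ ¬G.Adj x y

/-- The induced subgraph of `G` on `A` is vertex decomposable. -/
inductive VertexDecomposableOn (G : SimpleGraph V) : Finset V → Prop
  | edgeless (A : Finset V) (h : ∀ u ∈ A, ∀ v ∈ A, ¬G.Adj u v) : VertexDecomposableOn G A
  | shed (A : Finset V) (x : V) (hx : x ∈ A)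
      (hlink : VertexDecomposableOn G (delClosedNbhd G A x))
      (hdel : VertexDecomposableOn G (A.erase x))
      (hexch : ∀ S, IsIndepIn G (delClosedNbhd G A x) S →
        ∃ y ∈ A, G.Adj x y ∧ IsIndepIn G (A.erase x) (insert y S)) :
      VertexDecomposableOn G A

/-- `x` is a shedding vertex of the induced subgraph of `G` on `A`. -/
def IsSheddingVertexOn (G : SimpleGraph V) (A : Finset V) (x : V) : Prop :=
  x ∈ A ∧
  VertexDecomposableOn G (delClosedNbhd G A x) ∧
  VertexDecomposableOn G (A.erase x) ∧
  ∀ S, IsIndepIn G (delClosedNbhd G A x) S →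
    ∃ y ∈ A, G.Adj x y ∧ IsIndepIn G (A.erase x) (insert y S)

/-- The independence complex of the induced subgraph of `G` on `A` is shellable:
there is an ordering `F 0, F 1, …` of its facets (the maximal independent sets) such
that for every `i`, every face of the subcomplex `(⋃ j < i, ⟨F j⟩) ∩ ⟨F i⟩` is contained
in a face of that subcomplex of cardinality `(F i).card - 1` (i.e. the subcomplex is
pure of dimension `dim (F i) - 1`). -/
def ShellableOn (G : SimpleGraph V) (A : Finset V) : Prop :=
  ∃ (t : ℕ) (F : Fin t → Finset V),
    Function.Injective F ∧
    (∀ S, IsMaxIndepIn G A S ↔ ∃ i, F i = S) ∧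
    ∀ i : Fin t, ∀ S : Finset V, S ⊆ F i → (∃ j, j < i ∧ S ⊆ F j) →
      ∃ S' : Finset V, S ⊆ S' ∧ S' ⊆ F i ∧ (∃ j, j < i ∧ S' ⊆ F j) ∧
        S'.card = (F i).card - 1

/-- A graph is chordal if every cycle of length at least four has a chord, i.e. an
edge of the graph joining two vertices of the cycle that is not an edge of the cycle. -/
def IsChordal (G : SimpleGraph V) : Prop :=
  ∀ (x : V) (w : G.Walk x x), w.IsCycle → 4 ≤ w.length →
    ∃ u v, u ∈ w.support ∧ v ∈ w.support ∧ G.Adj u v ∧ s(u, v) ∉ w.edges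

/-- The induced subgraph of `G` on `A` is a cycle graph on `m` vertices. -/
def IsCycleGraphOn (G : SimpleGraph V) (A : Finset V) (m : ℕ) : Prop :=
  (∀ u v, G.Adj u v → u ∈ A ∧ v ∈ A) ∧
  Nonempty (G.induce (A : Set V) ≃g SimpleGraph.cycleGraph m)

/-- The independence number of the induced subgraph of `G` on `A`. -/
noncomputable def indepNumOn (G : SimpleGraph V) (A : Finset V) : ℕ :=
  sSup {k | ∃ S, IsIndepIn G A S ∧ S.card = k}

/-- Every independent set extends to a maximal independent set. -/
theorem aux_exists_maxIndep_superset (G : SimpleGraph V) (A S : Finset V)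
    (hS : IsIndepIn G A S) : ∃ T, IsMaxIndepIn G A T ∧ S ⊆ T := by
  classical
  let C := A.powerset.filter (fun T => IsIndepIn G A T ∧ S ⊆ T)
  have hne : C.Nonempty := ⟨S, by
    simp only [C, Finset.mem_filter, Finset.mem_powerset]
    exact ⟨hS.1, hS, le_refl S⟩⟩
  obtain ⟨T, hT, hmax⟩ := C.exists_max_image Finset.card hne
  simp only [C, Finset.mem_filter, Finset.mem_powerset] at hT
  refine ⟨T, ⟨hT.2.1, ?_⟩, hT.2.2⟩
  intro U hU hTU
  have hUmem : U ∈ C := by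
    simp only [C, Finset.mem_filter, Finset.mem_powerset]
    exact ⟨hU.1, hU, hT.2.2.trans hTU⟩
  exact Finset.eq_of_subset_of_card_le hTU (hmax U hUmem)

/-- Under unmixedness, every maximal independent set has cardinality the independence
number. -/
theorem aux_maxIndep_card_eq (G : SimpleGraph V) (A : Finset V) (hA : UnmixedOn G A)
    {S : Finset V} (hS : IsMaxIndepIn G A S) : S.card = indepNumOn G A := by
  have hbdd : BddAbove {k | ∃ T, IsIndepIn G A T ∧ T.card = k} := by
    refine ⟨A.card, ?_⟩
    rintro k ⟨T, hT, rfl⟩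
    exact Finset.card_le_card hT.1
  have hmem : S.card ∈ {k | ∃ T, IsIndepIn G A T ∧ T.card = k} := ⟨S, hS.1, rfl⟩
  have hle : S.card ≤ indepNumOn G A := le_csSup hbdd hmem
  have hne : {k | ∃ T, IsIndepIn G A T ∧ T.card = k}.Nonempty := ⟨_, hmem⟩
  obtain ⟨T, hT, hTc⟩ := Nat.sSup_mem hne hbdd
  obtain ⟨T', hT', hsub⟩ := aux_exists_maxIndep_superset G A T hT
  have hge : indepNumOn G A ≤ S.card := by
    have : indepNumOn G A = T.card := hTc.symm
    rw [this]
    calc T.card ≤ T'.card := Finset.card_le_card hsub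
      _ = S.card := hA T' S hT' hS
  omega

/-- If `x` has a neighbor `y ∈ A` and both `A` and `A \ {x}` are unmixed, then every
maximal independent set of `A \ {x}` has cardinality `indepNumOn G A`. -/
theorem aux_erase_maxIndep_card (G : SimpleGraph V) (A : Finset V) (x y : V)
    (hy : y ∈ A) (hadj : G.Adj x y)
    (hun : UnmixedOn G A) (hun' : UnmixedOn G (A.erase x))
    {T : Finset V} (hT : IsMaxIndepIn G (A.erase x) T) : T.card = indepNumOn G A := by
  have hyx : y ≠ x := fun h => G.irrefl (h ▸ hadj)
  have hyE : y ∈ A.erase x := Finset.mem_erase.mpr ⟨hyx, hy⟩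
  have hyindep : IsIndepIn G (A.erase x) {y} := by
    refine ⟨Finset.singleton_subset_iff.mpr hyE, ?_⟩
    intro u hu v hv
    rw [Finset.mem_singleton] at hu hv
    subst hu; subst hv; exact G.irrefl
  obtain ⟨T', hT', hsub⟩ := aux_exists_maxIndep_superset G (A.erase x) {y} hyindep
  have hyT' : y ∈ T' := hsub (Finset.mem_singleton_self y)
  have hcard : T.card = T'.card := hun' T T' hT hT'
  have hT'A : IsMaxIndepIn G A T' := by
    refine ⟨⟨hT'.1.1.trans (Finset.erase_subset x A), hT'.1.2⟩, ?_⟩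
    intro U hU hTU
    have hxU : x ∉ U := by
      intro hxU
      exact hU.2 x hxU y (hTU hyT') hadj
    have hUE : IsIndepIn G (A.erase x) U := by
      refine ⟨?_, hU.2⟩
      intro u hu
      exact Finset.mem_erase.mpr ⟨fun h => hxU (h ▸ hu), hU.1 hu⟩
    exact hT'.2 U hUE hTU
  rw [hcard]
  exact aux_maxIndep_card_eq G A hun hT'A

/-- If `Gs i` and `Gs i \ {x i}` are unmixed for every `i`, then every
maximal independent set of the attachment graph `G(G_1, …, G_n)` has cardinality
`α(G_1) + ⋯ + α(G_n)`; in particular, the attachment graph is unmixed. -/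
theorem stmt_10 {V : Type*} [DecidableEq V] (n : ℕ) (x : Fin n → V) (B : Fin n → Finset V)
    (G : SimpleGraph V) (Gs : Fin n → SimpleGraph V)
    (hxinj : Function.Injective x)
    (hGsupp : ∀ u v, G.Adj u v → (∃ i, u = x i) ∧ (∃ j, v = x j))
    (hxB : ∀ i, x i ∈ B i)
    (hBcard : ∀ i, 2 ≤ (B i).card)
    (hBdisj : ∀ i j, i ≠ j → Disjoint (B i) (B j))
    (hGssupp : ∀ i, ∀ u v, (Gs i).Adj u v → u ∈ B i ∧ v ∈ B i)
    (hconn : ∀ i, ((Gs i).induce ((B i : Set V))).Connected)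
    (hun : ∀ i, UnmixedOn (Gs i) (B i))
    (hun' : ∀ i, UnmixedOn (Gs i) ((B i).erase (x i))) :
    (∀ S, IsMaxIndepIn (G ⊔ ⨆ i, Gs i) (Finset.univ.biUnion B) S →
        S.card = ∑ i, indepNumOn (Gs i) (B i)) ∧
      UnmixedOn (G ⊔ ⨆ i, Gs i) (Finset.univ.biUnion B) := by
  classical
  set H := G ⊔ ⨆ i, Gs i with hH
  set A := Finset.univ.biUnion B with hA
  -- membership of x j in B i forces j = i
  have hxBi : ∀ i j, x j ∈ B i → j = i := by
    intro i j h
    by_contra hne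
    exact Finset.disjoint_left.mp (hBdisj j i hne) (hxB j) h
  have hBi : ∀ i j (u : V), u ∈ B i → u ∈ B j → i = j := by
    intro i j u hi hj
    by_contra hne
    exact Finset.disjoint_left.mp (hBdisj i j hne) hi hj
  -- adjacency in H
  have hHadj : ∀ u v, H.Adj u v ↔ G.Adj u v ∨ ∃ i, (Gs i).Adj u v := by
    intro u v
    simp [hH, SimpleGraph.sup_adj, SimpleGraph.iSup_adj]
  -- adjacency in H within B i is adjacency in Gs i
  have hadjBi : ∀ i u v, u ∈ B i → v ∈ B i → (H.Adj u v ↔ (Gs i).Adj u v) := by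
    intro i u v hu hv
    rw [hHadj]
    constructor
    · rintro (hG | ⟨j, hj⟩)
      · obtain ⟨⟨k, rfl⟩, ⟨l, rfl⟩⟩ := hGsupp u v hG
        have hk := hxBi i k hu
        have hl := hxBi i l hv
        subst hk; subst hl
        exact absurd rfl hG.ne
      · have := hBi j i u (hGssupp j u v hj).1 hu
        subst this
        exact hj
    · intro h
      exact Or.inr ⟨i, h⟩
  -- neighbors of a vertex of B i other than x i are in B i
  have hnbhd : ∀ i (w u : V), w ∈ B i → w ≠ x i → H.Adj w u → (Gs i).Adj w u ∧ u ∈ B i := by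
    intro i w u hw hwx hadj
    rw [hHadj] at hadj
    rcases hadj with hG | ⟨j, hj⟩
    · obtain ⟨⟨k, rfl⟩, _⟩ := hGsupp w u hG
      exact absurd (congrArg x (hxBi i k hw)) hwx
    · have hji : j = i := hBi j i w (hGssupp j w u hj).1 hw
      rw [hji] at hj
      exact ⟨hj, (hGssupp i w u hj).2⟩
  -- the key claim
  have key : ∀ S, IsMaxIndepIn H A S → S.card = ∑ i, indepNumOn (Gs i) (B i) := by
    intro S hS
    have hSsub : S ⊆ A := hS.1.1
    -- the pieces S ∩ B i
    have hSeq : S = Finset.univ.biUnion (fun i => S ∩ B i) := by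
      ext a
      simp only [Finset.mem_biUnion, Finset.mem_univ, Finset.mem_inter, true_and]
      constructor
      · intro ha
        obtain ⟨i, _, hi⟩ := Finset.mem_biUnion.mp (hSsub ha)
        exact ⟨i, ha, hi⟩
      · rintro ⟨i, ha, _⟩
        exact ha
    have hcard : S.card = ∑ i, (S ∩ B i).card := by
      conv_lhs => rw [hSeq]
      apply Finset.card_biUnion
      intro i _ j _ hij
      exact (hBdisj i j hij).mono Finset.inter_subset_right Finset.inter_subset_right
    rw [hcard]
    apply Finset.sum_congr rfl
    intro i _
    set Si := S ∩ B i with hSi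
    -- Si is independent in (Gs i, B i)
    have hSiIndep : IsIndepIn (Gs i) (B i) Si := by
      refine ⟨Finset.inter_subset_right, ?_⟩
      intro u hu v hv hadj
      exact hS.1.2 u (Finset.mem_inter.mp hu).1 v (Finset.mem_inter.mp hv).1
        ((hadjBi i u v (Finset.mem_inter.mp hu).2 (Finset.mem_inter.mp hv).2).mpr hadj)
    -- a neighbor y of x i inside B i
    obtain ⟨y, hyB, hyadj⟩ : ∃ y, y ∈ B i ∧ (Gs i).Adj (x i) y := by
      obtain ⟨z, hz, hzx⟩ :=
        Finset.exists_mem_ne (lt_of_lt_of_le one_lt_two (hBcard i)) (x i)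
      have hreach := (hconn i).preconnected ⟨x i, Finset.mem_coe.mpr (hxB i)⟩
        ⟨z, Finset.mem_coe.mpr hz⟩
      obtain ⟨w⟩ := hreach
      have hne : (⟨x i, Finset.mem_coe.mpr (hxB i)⟩ : ((B i : Set V))) ≠
          ⟨z, Finset.mem_coe.mpr hz⟩ := fun hEq => hzx (congrArg Subtype.val hEq).symm
      have hadj := SimpleGraph.Walk.adj_snd (SimpleGraph.Walk.not_nil_of_ne hne)
        (p := w)
      exact ⟨(w.getVert 1).1, Finset.mem_coe.mp (w.getVert 1).2, hadj⟩
    by_cases hmax : IsMaxIndepIn (Gs i) (B i) Si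
    · exact aux_maxIndep_card_eq (Gs i) (B i) (hun i) hmax
    · -- Si is not maximal in B i; show x i ∉ S and Si is maximal in (B i).erase (x i)
      -- first: there is v ∈ B i \ Si with insert v Si independent
      obtain ⟨v, hvB, hvS, hvIndep⟩ : ∃ v, v ∈ B i ∧ v ∉ Si ∧
          IsIndepIn (Gs i) (B i) (insert v Si) := by
        rw [IsMaxIndepIn, not_and] at hmax
        push_neg at hmax
        obtain ⟨T, hT, hsub, hne⟩ := hmax hSiIndep
        obtain ⟨v, hvT, hvSi⟩ := Finset.exists_of_ssubset (hsub.ssubset_of_ne hne)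
        have hins : insert v Si ⊆ T := Finset.insert_subset hvT hsub
        exact ⟨v, hT.1 hvT, hvSi, Finset.insert_subset (hT.1 hvT) hSiIndep.1,
          fun a ha b hb => hT.2 a (hins ha) b (hins hb)⟩
      have hvnS : v ∉ S := fun h => hvS (Finset.mem_inter.mpr ⟨h, hvB⟩)
      -- v must be x i (it is blocked only by an outside G-edge)
      have hvx : v = x i := by
        by_contra hvx
        -- then insert v S would be independent in H, contradicting maximality of S
        have hins : IsIndepIn H A (insert v S) := by
          refine ⟨Finset.insert_subset (Finset.mem_biUnion.mpr ⟨i, Finset.mem_univ i, hvB⟩)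
            hSsub, ?_⟩
          intro a ha b hb hadj
          rcases Finset.mem_insert.mp ha with rfl | haS
          · rcases Finset.mem_insert.mp hb with rfl | hbS
            · exact H.irrefl hadj
            · obtain ⟨hg, hbB⟩ := hnbhd i a b hvB hvx hadj
              exact hvIndep.2 a (Finset.mem_insert_self _ _) b
                (Finset.mem_insert_of_mem (Finset.mem_inter.mpr ⟨hbS, hbB⟩)) hg
          · rcases Finset.mem_insert.mp hb with rfl | hbS
            · obtain ⟨hg, haB⟩ := hnbhd i b a hvB hvx hadj.symm
              exact hvIndep.2 b (Finset.mem_insert_self _ _) a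
                (Finset.mem_insert_of_mem (Finset.mem_inter.mpr ⟨haS, haB⟩)) hg
            · exact hS.1.2 a haS b hbS hadj
        have := hS.2 (insert v S) hins (Finset.subset_insert v S)
        exact hvnS (this ▸ Finset.mem_insert_self v S)
      subst hvx
      -- Si is a maximal independent set of (B i).erase (x i)
      have hSiE : IsMaxIndepIn (Gs i) ((B i).erase (x i)) Si := by
        refine ⟨⟨?_, hSiIndep.2⟩, ?_⟩
        · intro a ha
          refine Finset.mem_erase.mpr ⟨?_, (Finset.mem_inter.mp ha).2⟩
          rintro rfl
          exact hvS ha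
        · intro U hU hsub
          by_contra hne
          obtain ⟨w, hwU, hwSi⟩ := Finset.exists_of_ssubset (hsub.ssubset_of_ne hne)
          have hwE := hU.1 hwU
          have hwB : w ∈ B i := Finset.mem_of_mem_erase hwE
          have hwx : w ≠ x i := (Finset.mem_erase.mp hwE).1
          have hwnS : w ∉ S := fun h => hwSi (Finset.mem_inter.mpr ⟨h, hwB⟩)
          have hins : IsIndepIn H A (insert w S) := by
            refine ⟨Finset.insert_subset (Finset.mem_biUnion.mpr ⟨i, Finset.mem_univ i, hwB⟩)
              hSsub, ?_⟩
            intro a ha b hb hadj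
            rcases Finset.mem_insert.mp ha with rfl | haS
            · rcases Finset.mem_insert.mp hb with rfl | hbS
              · exact H.irrefl hadj
              · obtain ⟨hg, hbB⟩ := hnbhd i a b hwB hwx hadj
                exact hU.2 a hwU b (hsub (Finset.mem_inter.mpr ⟨hbS, hbB⟩)) hg
            · rcases Finset.mem_insert.mp hb with rfl | hbS
              · obtain ⟨hg, haB⟩ := hnbhd i b a hwB hwx hadj.symm
                exact hU.2 b hwU a (hsub (Finset.mem_inter.mpr ⟨haS, haB⟩)) hg
              · exact hS.1.2 a haS b hbS hadj
          have := hS.2 (insert w S) hins (Finset.subset_insert w S)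
          exact hwnS (this ▸ Finset.mem_insert_self w S)
      exact aux_erase_maxIndep_card (Gs i) (B i) (x i) y hyB hyadj (hun i) (hun' i) hSiE
  refine ⟨key, ?_⟩
  intro S T hS hT
  rw [key S hS, key T hT]
end

section
/- Let G be a finite simple graph on vertex set {x_{11}, …, x_{n1}} with no isolated vertex. Let C_1, …, C_m (0 ≤ m ≤ n) be cycle graphs with x_{i1} ∈ V(C_i), and let G_{m+1}, …, G_n be connected chordal graphs with at least two vertices such that x_{i1} is a neighbor of a simplicial vertex of G_i for each i = m+1, …, n. Set G' = G(C_1, …, C_m, G_{m+1}, …, G_n). Then G' is unmixed if and only if every cycle C_i (1 ≤ i ≤ m) has length 3 or 5 and G_i is unmixed for every i = m+1, …, n. -/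
variable {V : Type*} [DecidableEq V]

section Auxiliary

set_option linter.unusedSectionVars false

lemma indep_mono {G : SimpleGraph V} {A S S' : Finset V} (h : IsIndepIn G A S) (hs : S' ⊆ S) :
    IsIndepIn G A S' :=
  ⟨hs.trans h.1, fun u hu v hv => h.2 u (hs hu) v (hs hv)⟩

lemma isMaxIndepIn_iff {G : SimpleGraph V} {A S : Finset V} :
    IsMaxIndepIn G A S ↔ IsIndepIn G A S ∧ ∀ v ∈ A, v ∉ S → ∃ u ∈ S, G.Adj u v := by
  constructor
  · rintro ⟨hi, hmax⟩
    refine ⟨hi, fun v hvA hvS => ?_⟩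
    by_contra hno
    push_neg at hno
    have hins : IsIndepIn G A (insert v S) := by
      refine ⟨Finset.insert_subset hvA hi.1, fun a ha b hb hadj => ?_⟩
      rcases Finset.mem_insert.1 ha with ha' | ha' <;>
        rcases Finset.mem_insert.1 hb with hb' | hb'
      · rw [ha', hb'] at hadj; exact G.loopless.irrefl v hadj
      · rw [ha'] at hadj; exact hno b hb' hadj.symm
      · rw [hb'] at hadj; exact hno a ha' hadj
      · exact hi.2 a ha' b hb' hadj
    have := hmax _ hins (Finset.subset_insert _ _)
    exact hvS (this ▸ Finset.mem_insert_self v S)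
  · rintro ⟨hi, hdom⟩
    refine ⟨hi, fun T hT hST => ?_⟩
    refine Finset.Subset.antisymm hST fun v hvT => ?_
    by_contra hvS
    obtain ⟨u, huS, hadj⟩ := hdom v (hT.1 hvT) hvS
    exact hT.2 u (hST huS) v hvT hadj

lemma exists_maxIndep {G : SimpleGraph V} {A S : Finset V} (h : IsIndepIn G A S) :
    ∃ T, S ⊆ T ∧ IsMaxIndepIn G A T := by
  classical
  set 𝒮 : Finset (Finset V) := A.powerset.filter (fun T => IsIndepIn G A T ∧ S ⊆ T) with h𝒮
  have hSmem : S ∈ 𝒮 := by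
    simp only [h𝒮, Finset.mem_filter, Finset.mem_powerset]
    exact ⟨h.1, h, Finset.Subset.refl S⟩
  obtain ⟨T, hT𝒮, hTmax⟩ := 𝒮.exists_max_image Finset.card ⟨S, hSmem⟩
  simp only [h𝒮, Finset.mem_filter, Finset.mem_powerset] at hT𝒮
  refine ⟨T, hT𝒮.2.2, hT𝒮.2.1, fun T' hT' hTT' => ?_⟩
  have hT'mem : T' ∈ 𝒮 := by
    simp only [h𝒮, Finset.mem_filter, Finset.mem_powerset]
    exact ⟨hT'.1, hT', hT𝒮.2.2.trans hTT'⟩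
  exact Finset.eq_of_subset_of_card_le hTT' (hTmax T' hT'mem)

lemma erase_max_of_simplicial {Gi : SimpleGraph V} {Bi : Finset V} {xi z : V}
    (hz : z ∈ Bi) (hzx : Gi.Adj z xi)
    (hsimpl : ∀ u v, Gi.Adj z u → Gi.Adj z v → u ≠ v → Gi.Adj u v)
    {S : Finset V} (hS : IsMaxIndepIn Gi (Bi.erase xi) S) :
    IsMaxIndepIn Gi Bi S := by
  rw [isMaxIndepIn_iff] at hS ⊢
  obtain ⟨⟨hsub, hind⟩, hdom⟩ := hS
  refine ⟨⟨hsub.trans (Finset.erase_subset _ _), hind⟩, fun v hv hvS => ?_⟩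
  by_cases hvx : v = xi
  · subst hvx
    by_cases hzS : z ∈ S
    · exact ⟨z, hzS, hzx⟩
    · have hzB : z ∈ Bi.erase v := Finset.mem_erase.2 ⟨hzx.ne, hz⟩
      obtain ⟨w, hwS, hwz⟩ := hdom z hzB hzS
      have hwv : w ≠ v := fun h => (Finset.mem_erase.1 (hsub hwS)).1 (h ▸ rfl)
      exact ⟨w, hwS, hsimpl w v hwz.symm hzx hwv⟩
  · exact hdom v (Finset.mem_erase.2 ⟨hvx, hv⟩) hvS

section Transfer

variable {W : Type*} [DecidableEq W] {Gi : SimpleGraph V} {Bi : Finset V} {K : SimpleGraph W}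

/-- transfer map from finsets of `W` to finsets of vertices of `Bi`. -/
noncomputable def tmap (e : (Gi.induce (Bi : Set V)) ≃g K) (F : Finset W) : Finset V :=
  F.image (fun a => ((e.symm a : (Bi : Set V)) : V))

lemma tmap_inj (e : (Gi.induce (Bi : Set V)) ≃g K) :
    Function.Injective (fun a : W => ((e.symm a : (Bi : Set V)) : V)) := by
  intro a b hab
  exact e.symm.injective (Subtype.ext hab)

lemma tmap_card (e : (Gi.induce (Bi : Set V)) ≃g K) (F : Finset W) :
    (tmap e F).card = F.card :=
  Finset.card_image_of_injective _ (tmap_inj e)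

lemma tmap_mem {e : (Gi.induce (Bi : Set V)) ≃g K} {F : Finset W} {v : V} :
    v ∈ tmap e F ↔ ∃ a ∈ F, ((e.symm a : (Bi : Set V)) : V) = v := by
  simp [tmap]

lemma tmap_subset (e : (Gi.induce (Bi : Set V)) ≃g K) (F : Finset W) : tmap e F ⊆ Bi := by
  intro v hv
  obtain ⟨a, _, rfl⟩ := tmap_mem.1 hv
  exact (e.symm a).2

lemma tmap_subset_iff {e : (Gi.induce (Bi : Set V)) ≃g K} {F C : Finset W} :
    tmap e F ⊆ tmap e C ↔ F ⊆ C :=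
  Finset.image_subset_image_iff (tmap_inj e)

lemma tmap_adj {e : (Gi.induce (Bi : Set V)) ≃g K} {a b : W} :
    Gi.Adj ((e.symm a : (Bi : Set V)) : V) ((e.symm b : (Bi : Set V)) : V) ↔ K.Adj a b := by
  have h := e.symm.map_adj_iff (v := a) (w := b)
  simpa using h

lemma tmap_univ [Fintype W] (e : (Gi.induce (Bi : Set V)) ≃g K) :
    tmap e Finset.univ = Bi := by
  apply Finset.Subset.antisymm (tmap_subset e _)
  intro v hv
  exact tmap_mem.2 ⟨e ⟨v, hv⟩, Finset.mem_univ _, by simp⟩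

lemma tmap_surj (e : (Gi.induce (Bi : Set V)) ≃g K) [Fintype W] {S : Finset V} (hS : S ⊆ Bi) :
    ∃ F : Finset W, tmap e F = S := by
  classical
  refine ⟨Finset.univ.filter (fun a => ((e.symm a : (Bi : Set V)) : V) ∈ S), ?_⟩
  ext v
  simp only [tmap_mem, Finset.mem_filter, Finset.mem_univ, true_and]
  constructor
  · rintro ⟨a, ha, rfl⟩; exact ha
  · intro hv
    exact ⟨e ⟨v, hS hv⟩, by simpa using hv, by simp⟩

lemma tmap_erase (e : (Gi.induce (Bi : Set V)) ≃g K) [Fintype W] {xi : V} (hxi : xi ∈ Bi) :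
    tmap e (Finset.univ.erase (e ⟨xi, hxi⟩)) = Bi.erase xi := by
  have h := Finset.image_erase (tmap_inj e) Finset.univ (e ⟨xi, hxi⟩)
  have h' : tmap e (Finset.univ.erase (e ⟨xi, hxi⟩)) =
      (tmap e Finset.univ).erase ((e.symm (e ⟨xi, hxi⟩) : (Bi : Set V)) : V) := h
  rw [h', tmap_univ]
  congr 1
  simp

lemma tmap_maxIndep_iff (e : (Gi.induce (Bi : Set V)) ≃g K) (C F : Finset W) :
    IsMaxIndepIn Gi (tmap e C) (tmap e F) ↔ IsMaxIndepIn K C F := by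
  rw [isMaxIndepIn_iff, isMaxIndepIn_iff]
  constructor
  · rintro ⟨⟨hsub, hind⟩, hdom⟩
    refine ⟨⟨tmap_subset_iff.1 hsub, fun a ha b hb hadj => ?_⟩, fun b hbC hbF => ?_⟩
    · exact hind _ (tmap_mem.2 ⟨a, ha, rfl⟩) _ (tmap_mem.2 ⟨b, hb, rfl⟩) (tmap_adj.2 hadj)
    · have hvC : ((e.symm b : (Bi : Set V)) : V) ∈ tmap e C := tmap_mem.2 ⟨b, hbC, rfl⟩
      have hvF : ((e.symm b : (Bi : Set V)) : V) ∉ tmap e F := by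
        intro hmem
        obtain ⟨a, haF, ha⟩ := tmap_mem.1 hmem
        exact hbF ((tmap_inj e ha) ▸ haF)
      obtain ⟨u, huF, hadj⟩ := hdom _ hvC hvF
      obtain ⟨a, haF, rfl⟩ := tmap_mem.1 huF
      exact ⟨a, haF, tmap_adj.1 hadj⟩
  · rintro ⟨⟨hsub, hind⟩, hdom⟩
    refine ⟨⟨tmap_subset_iff.2 hsub, fun u hu v hv hadj => ?_⟩, fun v hvC hvF => ?_⟩
    · obtain ⟨a, ha, rfl⟩ := tmap_mem.1 hu
      obtain ⟨b, hb, rfl⟩ := tmap_mem.1 hv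
      exact hind a ha b hb (tmap_adj.1 hadj)
    · obtain ⟨b, hbC, rfl⟩ := tmap_mem.1 hvC
      have hbF : b ∉ F := fun h => hvF (tmap_mem.2 ⟨b, h, rfl⟩)
      obtain ⟨a, haF, hadj⟩ := hdom b hbC hbF
      exact ⟨_, tmap_mem.2 ⟨a, haF, rfl⟩, tmap_adj.2 hadj⟩

end Transfer

section Decide

instance {W : Type*} [DecidableEq W] [Fintype W] (G : SimpleGraph W) [DecidableRel G.Adj]
    (A S : Finset W) : Decidable (IsIndepIn G A S) := by unfold IsIndepIn; infer_instance

instance {W : Type*} [DecidableEq W] [Fintype W] (G : SimpleGraph W) [DecidableRel G.Adj]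
    (A S : Finset W) : Decidable (IsMaxIndepIn G A S) := by unfold IsMaxIndepIn; infer_instance

lemma cyc3_card {m : ℕ} (hm : m = 3) (F : Finset (Fin m))
    (h : IsMaxIndepIn (SimpleGraph.cycleGraph m) Finset.univ F) : F.card = 1 := by
  subst hm; revert F; decide

lemma cyc3_card_erase {m : ℕ} (hm : m = 3) (q : Fin m) (F : Finset (Fin m))
    (h : IsMaxIndepIn (SimpleGraph.cycleGraph m) (Finset.univ.erase q) F) : F.card = 1 := by
  subst hm; revert q F; decide

lemma cyc5_card {m : ℕ} (hm : m = 5) (F : Finset (Fin m))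
    (h : IsMaxIndepIn (SimpleGraph.cycleGraph m) Finset.univ F) : F.card = 2 := by
  subst hm; revert F; decide

lemma cyc5_card_erase {m : ℕ} (hm : m = 5) (q : Fin m) (F : Finset (Fin m))
    (h : IsMaxIndepIn (SimpleGraph.cycleGraph m) (Finset.univ.erase q) F) : F.card = 2 := by
  subst hm; revert q F; decide

end Decide

section PathNat

/-- arithmetic version of maximal independent sets of the path on vertices `1, …, k`. -/
def PMax (k : ℕ) (F : Finset ℕ) : Prop :=
  F ⊆ Finset.Icc 1 k ∧ (∀ a ∈ F, ∀ b ∈ F, ¬(b = a + 1 ∨ a = b + 1)) ∧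
    ∀ j ∈ Finset.Icc 1 k, j ∉ F → ∃ a ∈ F, a = j + 1 ∨ j = a + 1

lemma pmax_two_sizes {k : ℕ} (hk3 : 3 ≤ k) (hk4 : k ≠ 4) :
    ∃ F1 F2 : Finset ℕ, PMax k F1 ∧ PMax k F2 ∧ F1.card ≠ F2.card := by
  rcases Nat.lt_or_ge k 5 with hk5 | hk5
  · have hk : k = 3 := by omega
    subst hk
    exact ⟨{1, 3}, {2}, by refine ⟨?_, ?_, ?_⟩ <;> decide,
      by refine ⟨?_, ?_, ?_⟩ <;> decide, by decide⟩
  refine ⟨(Finset.range ((k+1)/2)).image (fun i => 2*i+1),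
    insert 2 ((Finset.range ((k-3)/2)).image (fun i => 2*i+5)), ⟨?_, ?_, ?_⟩, ⟨?_, ?_, ?_⟩, ?_⟩
  · intro j hj
    simp only [Finset.mem_image, Finset.mem_range] at hj
    obtain ⟨i, hi, rfl⟩ := hj
    simp only [Finset.mem_Icc]; omega
  · intro a ha b hb
    simp only [Finset.mem_image, Finset.mem_range] at ha hb
    obtain ⟨i, hi, rfl⟩ := ha; obtain ⟨i', hi', rfl⟩ := hb
    omega
  · intro j hj hjF
    simp only [Finset.mem_Icc] at hj
    simp only [Finset.mem_image, Finset.mem_range, not_exists, not_and] at hjF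
    have hje : j % 2 = 0 := by
      rcases Nat.mod_two_eq_zero_or_one j with h | h
      · exact h
      · exact absurd (by omega : 2 * (j/2) + 1 = j) (hjF (j/2) (by omega))
    refine ⟨j - 1, ?_, by omega⟩
    simp only [Finset.mem_image, Finset.mem_range]
    exact ⟨j/2 - 1, by omega, by omega⟩
  · intro j hj
    simp only [Finset.mem_insert, Finset.mem_image, Finset.mem_range] at hj
    rcases hj with rfl | ⟨i, hi, rfl⟩ <;> simp only [Finset.mem_Icc] <;> omega
  · intro a ha b hb
    simp only [Finset.mem_insert, Finset.mem_image, Finset.mem_range] at ha hb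
    rcases ha with rfl | ⟨i, hi, rfl⟩ <;> rcases hb with rfl | ⟨i', hi', rfl⟩ <;> omega
  · intro j hj hjF
    simp only [Finset.mem_Icc] at hj
    simp only [Finset.mem_insert, Finset.mem_image, Finset.mem_range, not_or, not_exists,
      not_and] at hjF
    obtain ⟨hj2, hjF⟩ := hjF
    obtain ⟨hj1, hjk⟩ := hj
    rcases Nat.lt_or_ge j 5 with h5 | h5
    · interval_cases j
      · exact ⟨2, by simp, by omega⟩
      · exact absurd rfl hj2
      · exact ⟨2, by simp, by omega⟩
      · refine ⟨5, ?_, by omega⟩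
        simp only [Finset.mem_insert, Finset.mem_image, Finset.mem_range]
        exact Or.inr ⟨0, by omega, by omega⟩
    · have hje : j % 2 = 0 := by
        rcases Nat.mod_two_eq_zero_or_one j with h | h
        · exact h
        · exact absurd (by omega : 2 * ((j-5)/2) + 5 = j) (hjF ((j-5)/2) (by omega))
      refine ⟨j - 1, ?_, by omega⟩
      simp only [Finset.mem_insert, Finset.mem_image, Finset.mem_range]
      exact Or.inr ⟨(j-6)/2, by omega, by omega⟩
  · have hinj1 : Function.Injective (fun i : ℕ => 2*i+1) := by
      intro a b h; dsimp only at h; omega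
    have hinj2 : Function.Injective (fun i : ℕ => 2*i+5) := by
      intro a b h; dsimp only at h; omega
    have h1 : ((Finset.range ((k+1)/2)).image (fun i => 2*i+1)).card = (k+1)/2 := by
      rw [Finset.card_image_of_injective _ hinj1, Finset.card_range]
    have h2 : (insert 2 ((Finset.range ((k-3)/2)).image (fun i => 2*i+5))).card = (k-3)/2 + 1 := by
      rw [Finset.card_insert_of_notMem, Finset.card_image_of_injective _ hinj2,
        Finset.card_range]
      simp only [Finset.mem_image, Finset.mem_range]
      rintro ⟨i, _, h⟩
      omega
    rw [h1, h2]; omega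

end PathNat

section FinCycle
open SimpleGraph
open scoped Fin.NatCast Fin.CommRing

variable {m : ℕ} [NeZero m]

lemma fin_cast_inj {a b : ℕ} (ha : a < m) (hb : b < m)
    (h : (a : Fin m) = (b : Fin m)) : a = b := by
  have := congrArg Fin.val h
  rwa [Fin.val_natCast, Fin.val_natCast, Nat.mod_eq_of_lt ha, Nat.mod_eq_of_lt hb] at this

lemma fin_sub_natCast {a b : ℕ} (hba : b ≤ a) :
    (a : Fin m) - (b : Fin m) = ((a - b : ℕ) : Fin m) := by
  have h : (a : Fin m) = (b : Fin m) + ((a - b : ℕ) : Fin m) := by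
    rw [← Nat.cast_add]
    congr 1
    omega
  rw [h]
  ring

lemma cycle_adj_succ (hm : 3 ≤ m) (q : Fin m) : (cycleGraph m).Adj q (q + 1) := by
  rw [cycleGraph_adj']
  right
  have h : q + 1 - q = 1 := by ring
  rw [h, ← Nat.cast_one, Fin.val_natCast, Nat.mod_eq_of_lt (by omega)]

lemma fin_cycle_adj (hm : 4 ≤ m) (q : Fin m) {a b : ℕ}
    (ha1 : 1 ≤ a) (ha2 : a ≤ m - 1) (hb1 : 1 ≤ b) (hb2 : b ≤ m - 1) :
    (cycleGraph m).Adj (q + (a : Fin m)) (q + (b : Fin m)) ↔ (a = b + 1 ∨ b = a + 1) := by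
  rw [cycleGraph_adj']
  have key : ∀ c d : ℕ, 1 ≤ c → c ≤ m - 1 → 1 ≤ d → d ≤ m - 1 →
      (((q + (c : Fin m)) - (q + (d : Fin m))).val = 1 ↔ c = d + 1) := by
    intro c d hc1 hc2 hd1 hd2
    have hsub : (q + (c : Fin m)) - (q + (d : Fin m)) = (c : Fin m) - (d : Fin m) := by ring
    rcases le_or_gt d c with hdc | hdc
    · rw [hsub, fin_sub_natCast hdc, Fin.val_natCast, Nat.mod_eq_of_lt (by omega)]
      omega
    · have h1 : (c : Fin m) - (d : Fin m) = -(((d - c : ℕ) : Fin m)) := by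
        rw [← fin_sub_natCast (m := m) (le_of_lt hdc)]; ring
      have hval : ((d - c : ℕ) : Fin m).val = d - c := by
        rw [Fin.val_natCast]; exact Nat.mod_eq_of_lt (by omega)
      have h2 : (-(((d - c : ℕ) : Fin m))).val = (m - (d - c)) % m := by
        rw [Fin.neg_def]
        simp only [hval]
      rw [hsub, h1, h2, Nat.mod_eq_of_lt (by omega)]
      omega
  constructor
  · rintro (h | h)
    · left; exact (key a b ha1 ha2 hb1 hb2).1 h
    · right; exact (key b a hb1 hb2 ha1 ha2).1 h
  · rintro (h | h)
    · left; exact (key a b ha1 ha2 hb1 hb2).2 h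
    · right; exact (key b a hb1 hb2 ha1 ha2).2 h

lemma fin_cycle_image (hm : 4 ≤ m) (q : Fin m) :
    (Finset.Icc 1 (m-1)).image (fun j : ℕ => q + (j : Fin m)) = Finset.univ.erase q := by
  apply Finset.eq_of_subset_of_card_le
  · intro v hv
    simp only [Finset.mem_image, Finset.mem_Icc] at hv
    obtain ⟨j, hj, rfl⟩ := hv
    refine Finset.mem_erase.2 ⟨?_, Finset.mem_univ _⟩
    intro h
    have h0 : q + (j : Fin m) = q + ((0 : ℕ) : Fin m) := by
      rw [Nat.cast_zero, add_zero]; exact h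
    have := fin_cast_inj (by omega) (by omega) (add_left_cancel h0)
    omega
  · rw [Finset.card_erase_of_mem (Finset.mem_univ q), Finset.card_univ, Fintype.card_fin]
    rw [Finset.card_image_of_injOn]
    · simp only [Nat.card_Icc]; omega
    · intro a ha b hb hab
      simp only [Finset.coe_Icc, Set.mem_Icc] at ha hb
      exact fin_cast_inj (by omega) (by omega) (add_left_cancel hab)

lemma pmax_transfer (hm : 4 ≤ m) (q : Fin m) {F : Finset ℕ} (hF : PMax (m-1) F) :
    IsMaxIndepIn (cycleGraph m) (Finset.univ.erase q) (F.image (fun j : ℕ => q + (j : Fin m))) ∧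
      (F.image (fun j : ℕ => q + (j : Fin m))).card = F.card := by
  obtain ⟨hFsub, hFind, hFdom⟩ := hF
  have hmem : ∀ j ∈ F, 1 ≤ j ∧ j ≤ m - 1 := by
    intro j hj; simpa only [Finset.mem_Icc] using hFsub hj
  constructor
  · rw [isMaxIndepIn_iff]
    refine ⟨⟨?_, ?_⟩, ?_⟩
    · rw [← fin_cycle_image hm q]
      exact Finset.image_subset_image hFsub
    · intro u hu v hv
      simp only [Finset.mem_image] at hu hv
      obtain ⟨a, ha, rfl⟩ := hu; obtain ⟨b, hb, rfl⟩ := hv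
      rw [fin_cycle_adj hm q (hmem a ha).1 (hmem a ha).2 (hmem b hb).1 (hmem b hb).2]
      intro h
      exact hFind b hb a ha (by tauto)
    · intro v hv hvF
      rw [← fin_cycle_image hm q] at hv
      simp only [Finset.mem_image, Finset.mem_Icc] at hv
      obtain ⟨j, hj, rfl⟩ := hv
      have hjF : j ∉ F := by
        intro h
        exact hvF (Finset.mem_image.2 ⟨j, h, rfl⟩)
      obtain ⟨a, haF, hadj⟩ := hFdom j (Finset.mem_Icc.2 hj) hjF
      refine ⟨q + (a : Fin m), Finset.mem_image.2 ⟨a, haF, rfl⟩, ?_⟩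
      rw [fin_cycle_adj hm q (hmem a haF).1 (hmem a haF).2 hj.1 hj.2]
      tauto
  · apply Finset.card_image_of_injOn
    intro a ha b hb hab
    have h1 := hmem a ha
    have h2 := hmem b hb
    exact fin_cast_inj (by omega) (by omega) (add_left_cancel hab)

lemma cycle_erase_two_sizes (hm4 : 4 ≤ m) (hm5 : m ≠ 5) (q : Fin m) :
    ∃ F1 F2 : Finset (Fin m),
      IsMaxIndepIn (cycleGraph m) (Finset.univ.erase q) F1 ∧
      IsMaxIndepIn (cycleGraph m) (Finset.univ.erase q) F2 ∧
      F1.card ≠ F2.card := by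
  obtain ⟨F1, F2, h1, h2, hne⟩ := pmax_two_sizes (k := m - 1) (by omega) (by omega)
  obtain ⟨h1m, h1c⟩ := pmax_transfer hm4 q h1
  obtain ⟨h2m, h2c⟩ := pmax_transfer hm4 q h2
  exact ⟨_, _, h1m, h2m, by rw [h1c, h2c]; exact hne⟩

end FinCycle

section MainCtx
variable {n : ℕ} {x : Fin n → V} {B : Fin n → Finset V} {G : SimpleGraph V}
  {Gs : Fin n → SimpleGraph V}

lemma mem_B_unique (hBdisj : ∀ i j, i ≠ j → Disjoint (B i) (B j)) {v : V} {i j : Fin n}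
    (hi : v ∈ B i) (hj : v ∈ B j) : i = j := by
  by_contra h
  exact Finset.disjoint_left.1 (hBdisj i j h) hi hj

lemma sup_adj_iff {u v : V} : (G ⊔ ⨆ i, Gs i).Adj u v ↔ G.Adj u v ∨ ∃ j, (Gs j).Adj u v := by
  simp [SimpleGraph.sup_adj, SimpleGraph.iSup_adj]

lemma comp_max
    (hxB : ∀ i, x i ∈ B i) (hBdisj : ∀ i j, i ≠ j → Disjoint (B i) (B j))
    (hGsupp : ∀ u v, G.Adj u v → (∃ i, u = x i) ∧ (∃ j, v = x j))
    (hsupp : ∀ j u v, (Gs j).Adj u v → u ∈ B j ∧ v ∈ B j)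
    (D : Fin n → Finset V)
    (h1 : ∀ j, D j ⊆ B j)
    (h2 : ∀ j, ∀ u ∈ D j, ∀ v ∈ D j, ¬(Gs j).Adj u v)
    (h3 : ∀ j k, x j ∈ D j → x k ∈ D k → j = k)
    (h4 : ∀ j, ∀ v ∈ B j, v ∉ D j → v ≠ x j → ∃ u ∈ D j, (Gs j).Adj u v)
    (h5 : ∀ j, x j ∉ D j → ∃ k, ∃ u ∈ D k, (G ⊔ ⨆ i, Gs i).Adj u (x j)) :
    IsMaxIndepIn (G ⊔ ⨆ i, Gs i) (Finset.univ.biUnion B) (Finset.univ.biUnion D) ∧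
      (Finset.univ.biUnion D).card = ∑ j, (D j).card := by
  constructor
  · rw [isMaxIndepIn_iff]
    refine ⟨⟨?_, ?_⟩, ?_⟩
    · intro v hv
      obtain ⟨j, -, hvj⟩ := Finset.mem_biUnion.1 hv
      exact Finset.mem_biUnion.2 ⟨j, Finset.mem_univ _, h1 j hvj⟩
    · intro u hu v hv hadj
      obtain ⟨j, -, huj⟩ := Finset.mem_biUnion.1 hu
      obtain ⟨k, -, hvk⟩ := Finset.mem_biUnion.1 hv
      rcases sup_adj_iff.1 hadj with hG | ⟨l, hGs⟩
      · obtain ⟨⟨a, rfl⟩, ⟨b, rfl⟩⟩ := hGsupp _ _ hG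
        have haj : a = j := mem_B_unique hBdisj (hxB a) (h1 j huj)
        have hbk : b = k := mem_B_unique hBdisj (hxB b) (h1 k hvk)
        have hjk : j = k := h3 j k (haj ▸ huj) (hbk ▸ hvk)
        exact hG.ne (by rw [haj, hbk, hjk])
      · obtain ⟨hul, hvl⟩ := hsupp l _ _ hGs
        have hlj : l = j := mem_B_unique hBdisj hul (h1 j huj)
        have hlk : l = k := mem_B_unique hBdisj hvl (h1 k hvk)
        have hjk : j = k := hlj.symm.trans hlk
        exact h2 j u huj v (hjk ▸ hvk) (hlj ▸ hGs)
    · intro v hv hvD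
      obtain ⟨j, -, hvj⟩ := Finset.mem_biUnion.1 hv
      have hvDj : v ∉ D j := fun h => hvD (Finset.mem_biUnion.2 ⟨j, Finset.mem_univ _, h⟩)
      by_cases hvx : v = x j
      · subst hvx
        obtain ⟨k, u, huk, hadj⟩ := h5 j hvDj
        exact ⟨u, Finset.mem_biUnion.2 ⟨k, Finset.mem_univ _, huk⟩, hadj⟩
      · obtain ⟨u, huj, hadj⟩ := h4 j v hvj hvDj hvx
        exact ⟨u, Finset.mem_biUnion.2 ⟨j, Finset.mem_univ _, huj⟩,
          sup_adj_iff.2 (Or.inr ⟨j, hadj⟩)⟩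
  · exact Finset.card_biUnion (fun i _ j _ hij =>
      (hBdisj i j hij).mono (h1 i) (h1 j))

lemma decomp_max
    (hxB : ∀ i, x i ∈ B i) (hBdisj : ∀ i j, i ≠ j → Disjoint (B i) (B j))
    (hGsupp : ∀ u v, G.Adj u v → (∃ i, u = x i) ∧ (∃ j, v = x j))
    (hsupp : ∀ j u v, (Gs j).Adj u v → u ∈ B j ∧ v ∈ B j)
    {S : Finset V}
    (hS : IsMaxIndepIn (G ⊔ ⨆ i, Gs i) (Finset.univ.biUnion B) S) (i : Fin n) :
    (x i ∈ S → IsMaxIndepIn (Gs i) (B i) (S ∩ B i)) ∧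
      (x i ∉ S → IsMaxIndepIn (Gs i) ((B i).erase (x i)) (S ∩ B i)) := by
  rw [isMaxIndepIn_iff] at hS
  obtain ⟨⟨hsub, hind⟩, hdom⟩ := hS
  have hindS : ∀ u ∈ S ∩ B i, ∀ v ∈ S ∩ B i, ¬(Gs i).Adj u v := by
    intro u hu v hv hadj
    exact hind u (Finset.mem_inter.1 hu).1 v (Finset.mem_inter.1 hv).1
      (sup_adj_iff.2 (Or.inr ⟨i, hadj⟩))
  have hkey : ∀ v ∈ B i, v ∉ S → v ≠ x i → ∃ u ∈ S ∩ B i, (Gs i).Adj u v := by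
    intro v hvB hvS hvx
    obtain ⟨u, huS, hadj⟩ := hdom v (Finset.mem_biUnion.2 ⟨i, Finset.mem_univ _, hvB⟩) hvS
    rcases sup_adj_iff.1 hadj with hG | ⟨l, hGs⟩
    · obtain ⟨-, ⟨b, rfl⟩⟩ := hGsupp _ _ hG
      exact absurd (mem_B_unique hBdisj (hxB b) hvB ▸ rfl) hvx
    · obtain ⟨hul, hvl⟩ := hsupp l _ _ hGs
      have hli : l = i := mem_B_unique hBdisj hvl hvB
      subst hli
      exact ⟨u, Finset.mem_inter.2 ⟨huS, hul⟩, hGs⟩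
  constructor
  · intro hxS
    rw [isMaxIndepIn_iff]
    refine ⟨⟨Finset.inter_subset_right, hindS⟩, fun v hvB hvS => ?_⟩
    have hvx : v ≠ x i := by
      rintro rfl
      exact hvS (Finset.mem_inter.2 ⟨hxS, hvB⟩)
    have hvS' : v ∉ S := fun h => hvS (Finset.mem_inter.2 ⟨h, hvB⟩)
    exact hkey v hvB hvS' hvx
  · intro hxS
    rw [isMaxIndepIn_iff]
    refine ⟨⟨?_, hindS⟩, fun v hv hvS => ?_⟩
    · intro v hv
      refine Finset.mem_erase.2 ⟨?_, (Finset.mem_inter.1 hv).2⟩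
      rintro rfl
      exact hxS (Finset.mem_inter.1 hv).1
    · obtain ⟨hvx, hvB⟩ := Finset.mem_erase.1 hv
      have hvS' : v ∉ S := fun h => hvS (Finset.mem_inter.2 ⟨h, hvB⟩)
      exact hkey v hvB hvS' hvx

end MainCtx

end Auxiliary


/-- the attachment graph `G(C_1, …, C_t, G_{t+1}, …, G_n)` is unmixed iff
every cycle has length 3 or 5 and `Gs i` is unmixed for every `i ≥ t`. -/
theorem stmt_14 {V : Type*} [DecidableEq V] (n t : ℕ) (ht : t ≤ n) (x : Fin n → V)
    (B : Fin n → Finset V) (G : SimpleGraph V) (Gs : Fin n → SimpleGraph V)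
    (ℓ : Fin n → ℕ)
    (hxinj : Function.Injective x)
    (hGsupp : ∀ u v, G.Adj u v → (∃ i, u = x i) ∧ (∃ j, v = x j))
    -- `G` has no isolated vertex
    (hnoiso : ∀ i, ∃ u, G.Adj (x i) u)
    (hxB : ∀ i, x i ∈ B i)
    (hBdisj : ∀ i j, i ≠ j → Disjoint (B i) (B j))
    -- for `i < t`, `Gs i` is a cycle graph of length `ℓ i ≥ 3` on the vertex set `B i`
    (hcyc : ∀ i : Fin n, (i : ℕ) < t → 3 ≤ ℓ i ∧ IsCycleGraphOn (Gs i) (B i) (ℓ i))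
    -- for `i ≥ t`, `Gs i` is a connected chordal graph with at least two vertices,
    -- attached to `G` at a neighbor `x i` of a simplicial vertex `z` of `Gs i`
    (hBcard : ∀ i : Fin n, t ≤ (i : ℕ) → 2 ≤ (B i).card)
    (hGssupp : ∀ i : Fin n, t ≤ (i : ℕ) → ∀ u v, (Gs i).Adj u v → u ∈ B i ∧ v ∈ B i)
    (hconn : ∀ i : Fin n, t ≤ (i : ℕ) → ((Gs i).induce ((B i : Set V))).Connected)
    (hchordal : ∀ i : Fin n, t ≤ (i : ℕ) → IsChordal (Gs i))
    (hsimp : ∀ i : Fin n, t ≤ (i : ℕ) → ∃ z ∈ B i,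
      (∀ u v, (Gs i).Adj z u → (Gs i).Adj z v → u ≠ v → (Gs i).Adj u v) ∧
      (Gs i).Adj z (x i)) :
    UnmixedOn (G ⊔ ⨆ i, Gs i) (Finset.univ.biUnion B) ↔
      (∀ i : Fin n, (i : ℕ) < t → ℓ i = 3 ∨ ℓ i = 5) ∧
        ∀ i : Fin n, t ≤ (i : ℕ) → UnmixedOn (Gs i) (B i) := by
    classical
  have hsupp : ∀ j : Fin n, ∀ u v, (Gs j).Adj u v → u ∈ B j ∧ v ∈ B j := by
    intro j u v hadj
    rcases Nat.lt_or_ge (j : ℕ) t with hj | hj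
    · exact ((hcyc j hj).2).1 u v hadj
    · exact hGssupp j hj u v hadj
  have hy : ∀ j : Fin n, ∃ y ∈ B j, (Gs j).Adj (x j) y := by
    intro j
    rcases Nat.lt_or_ge (j : ℕ) t with hj | hj
    · obtain ⟨hl3, hcyj⟩ := hcyc j hj
      obtain ⟨hBsuppj, ⟨e⟩⟩ := hcyj
      haveI : NeZero (ℓ j) := ⟨by omega⟩
      set q : Fin (ℓ j) := e ⟨x j, hxB j⟩ with hq
      have hadj : (SimpleGraph.cycleGraph (ℓ j)).Adj q (q + 1) := cycle_adj_succ hl3 q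
      have h2 := (tmap_adj (e := e) (a := q) (b := q + 1)).2 hadj
      have hxq : ((e.symm q : ((B j : Finset V) : Set V)) : V) = x j := by
        rw [hq]; simp
      rw [hxq] at h2
      exact ⟨_, Finset.mem_coe.1 (e.symm (q+1)).2, h2⟩
    · obtain ⟨z, hzB, hzsimp, hzadj⟩ := hsimp j hj
      exact ⟨z, hzB, hzadj.symm⟩
  have hE : ∀ j : Fin n, ∃ E, IsMaxIndepIn (Gs j) (B j) E ∧ x j ∉ E ∧
      ∃ u ∈ E, (Gs j).Adj u (x j) := by
    intro j
    obtain ⟨y, hyB, hyadj⟩ := hy j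
    have hyind : IsIndepIn (Gs j) (B j) {y} := by
      refine ⟨Finset.singleton_subset_iff.2 hyB, fun u hu v hv => ?_⟩
      rw [Finset.mem_singleton] at hu hv
      rw [hu, hv]
      exact (Gs j).loopless.irrefl y
    obtain ⟨E, hyE, hEmax⟩ := exists_maxIndep hyind
    have hyEm : y ∈ E := hyE (Finset.mem_singleton_self y)
    exact ⟨E, hEmax, fun hxE => hEmax.1.2 _ hxE _ hyEm hyadj, y, hyEm, hyadj.symm⟩
  choose E hEmax hExE hEdom using hE
  constructor
  · -- forward direction
    intro hunm
    constructor
    · -- every cycle has length 3 or 5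
      intro i hit
      by_contra hcon
      push_neg at hcon
      obtain ⟨hl3, hcyi⟩ := hcyc i hit
      obtain ⟨hBsuppi, ⟨e⟩⟩ := hcyi
      have hm4 : 4 ≤ ℓ i := by omega
      have hm5 : ℓ i ≠ 5 := hcon.2
      haveI : NeZero (ℓ i) := ⟨by omega⟩
      set q : Fin (ℓ i) := e ⟨x i, hxB i⟩ with hq
      obtain ⟨F1, F2, hF1, hF2, hFne⟩ := cycle_erase_two_sizes hm4 hm5 q
      have hmax1 : IsMaxIndepIn (Gs i) ((B i).erase (x i)) (tmap e F1) := by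
        have h := (tmap_maxIndep_iff e (Finset.univ.erase q) F1).2 hF1
        rwa [hq, tmap_erase e (hxB i)] at h
      have hmax2 : IsMaxIndepIn (Gs i) ((B i).erase (x i)) (tmap e F2) := by
        have h := (tmap_maxIndep_iff e (Finset.univ.erase q) F2).2 hF2
        rwa [hq, tmap_erase e (hxB i)] at h
      obtain ⟨u0, hu0⟩ := hnoiso i
      obtain ⟨-, j0, rfl⟩ := hGsupp _ _ hu0
      have hj0i : j0 ≠ i := by
        rintro rfl
        exact (G.loopless.irrefl _) hu0
      have hx0ind : IsIndepIn (Gs j0) (B j0) {x j0} := by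
        refine ⟨Finset.singleton_subset_iff.2 (hxB j0), fun u hu v hv => ?_⟩
        rw [Finset.mem_singleton] at hu hv
        rw [hu, hv]
        exact (Gs j0).loopless.irrefl _
      obtain ⟨E0, hxE0, hE0max⟩ := exists_maxIndep hx0ind
      have hxE0m : x j0 ∈ E0 := hxE0 (Finset.mem_singleton_self _)
      have build : ∀ Sc : Finset V, IsMaxIndepIn (Gs i) ((B i).erase (x i)) Sc →
          IsMaxIndepIn (G ⊔ ⨆ i, Gs i) (Finset.univ.biUnion B) (Finset.univ.biUnion
            (fun j => if j = i then Sc else if j = j0 then E0 else E j)) ∧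
          (Finset.univ.biUnion
            (fun j => if j = i then Sc else if j = j0 then E0 else E j)).card
            = ∑ j, (if j = i then Sc else if j = j0 then E0 else E j).card := by
        intro Sc hSc
        set D := fun j => if j = i then Sc else if j = j0 then E0 else E j with hD
        have hScsub : Sc ⊆ (B i).erase (x i) := hSc.1.1
        have hxSc : x i ∉ Sc := fun h => (Finset.mem_erase.1 (hScsub h)).1 rfl
        have hDi : D i = Sc := by simp [hD]
        have hDj0 : D j0 = E0 := by simp [hD, hj0i]
        have hDmax : ∀ j, j ≠ i → IsMaxIndepIn (Gs j) (B j) (D j) := by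
          intro j hji
          by_cases hjj0 : j = j0
          · subst hjj0; rw [hDj0]; exact hE0max
          · simp only [hD, if_neg hji, if_neg hjj0]; exact hEmax j
        have hDx : ∀ j, x j ∈ D j → j = j0 := by
          intro j hj
          by_cases hji : j = i
          · subst hji; rw [hDi] at hj; exact absurd hj hxSc
          · by_cases hjj0 : j = j0
            · exact hjj0
            · simp only [hD, if_neg hji, if_neg hjj0] at hj
              exact absurd hj (hExE j)
        apply comp_max hxB hBdisj hGsupp hsupp
        · intro j
          by_cases hji : j = i
          · subst hji; rw [hDi]
            exact hScsub.trans (Finset.erase_subset _ _)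
          · exact (hDmax j hji).1.1
        · intro j
          by_cases hji : j = i
          · subst hji; rw [hDi]; exact hSc.1.2
          · exact (hDmax j hji).1.2
        · intro j k hj hk
          rw [hDx j hj, hDx k hk]
        · intro j v hvB hvD hvx
          by_cases hji : j = i
          · subst hji
            rw [hDi] at hvD ⊢
            exact (isMaxIndepIn_iff.1 hSc).2 v (Finset.mem_erase.2 ⟨hvx, hvB⟩) hvD
          · exact (isMaxIndepIn_iff.1 (hDmax j hji)).2 v hvB hvD
        · intro j hxD
          by_cases hji : j = i
          · subst hji
            refine ⟨j0, x j0, ?_, ?_⟩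
            · rw [hDj0]; exact hxE0m
            · exact sup_adj_iff.2 (Or.inl hu0.symm)
          · by_cases hjj0 : j = j0
            · subst hjj0; rw [hDj0] at hxD; exact absurd hxE0m hxD
            · obtain ⟨u, huE, huadj⟩ := hEdom j
              refine ⟨j, u, ?_, sup_adj_iff.2 (Or.inr ⟨j, huadj⟩)⟩
              simp only [hD, if_neg hji, if_neg hjj0]
              exact huE
      obtain ⟨hU1, hc1⟩ := build (tmap e F1) hmax1
      obtain ⟨hU2, hc2⟩ := build (tmap e F2) hmax2
      have heq := hunm _ _ hU1 hU2
      rw [hc1, hc2] at heq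
      have hsplit : ∀ Sc : Finset V,
          ∑ j, (if j = i then Sc else if j = j0 then E0 else E j).card =
            Sc.card + ∑ j ∈ Finset.univ.erase i,
              (if j = i then Sc else if j = j0 then E0 else E j).card := by
        intro Sc
        rw [← Finset.add_sum_erase Finset.univ _ (Finset.mem_univ i), if_pos rfl]
      rw [hsplit, hsplit] at heq
      have hrest : ∑ j ∈ Finset.univ.erase i,
          (if j = i then tmap e F1 else if j = j0 then E0 else E j).card
          = ∑ j ∈ Finset.univ.erase i,
          (if j = i then tmap e F2 else if j = j0 then E0 else E j).card := by
        apply Finset.sum_congr rfl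
        intro j hj
        rw [if_neg (Finset.mem_erase.1 hj).1, if_neg (Finset.mem_erase.1 hj).1]
      rw [hrest] at heq
      have hcc : (tmap e F1).card = (tmap e F2).card := by omega
      rw [tmap_card, tmap_card] at hcc
      exact hFne hcc
    · -- each Gs i is unmixed
      intro i hti
      intro S T hSmax hTmax
      have build : ∀ Sc : Finset V, IsMaxIndepIn (Gs i) (B i) Sc →
          IsMaxIndepIn (G ⊔ ⨆ i, Gs i) (Finset.univ.biUnion B) (Finset.univ.biUnion
            (fun j => if j = i then Sc else E j)) ∧
          (Finset.univ.biUnion (fun j => if j = i then Sc else E j)).card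
            = ∑ j, (if j = i then Sc else E j).card := by
        intro Sc hSc
        set D := fun j => if j = i then Sc else E j with hD
        have hDi : D i = Sc := by simp [hD]
        have hDmax : ∀ j, IsMaxIndepIn (Gs j) (B j) (D j) := by
          intro j
          by_cases hji : j = i
          · subst hji; rw [hDi]; exact hSc
          · simp only [hD, if_neg hji]; exact hEmax j
        have hDx : ∀ j, x j ∈ D j → j = i := by
          intro j hj
          by_cases hji : j = i
          · exact hji
          · simp only [hD, if_neg hji] at hj
            exact absurd hj (hExE j)
        apply comp_max hxB hBdisj hGsupp hsupp
        · exact fun j => (hDmax j).1.1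
        · exact fun j => (hDmax j).1.2
        · intro j k hj hk
          rw [hDx j hj, hDx k hk]
        · intro j v hvB hvD hvx
          exact (isMaxIndepIn_iff.1 (hDmax j)).2 v hvB hvD
        · intro j hxD
          by_cases hji : j = i
          · subst hji
            obtain ⟨u, huS, huadj⟩ := (isMaxIndepIn_iff.1 (hDmax j)).2 (x j) (hxB j) hxD
            exact ⟨j, u, huS, sup_adj_iff.2 (Or.inr ⟨j, huadj⟩)⟩
          · obtain ⟨u, huE, huadj⟩ := hEdom j
            refine ⟨j, u, ?_, sup_adj_iff.2 (Or.inr ⟨j, huadj⟩)⟩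
            simp only [hD, if_neg hji]
            exact huE
      obtain ⟨hU1, hc1⟩ := build S hSmax
      obtain ⟨hU2, hc2⟩ := build T hTmax
      have heq := hunm _ _ hU1 hU2
      rw [hc1, hc2] at heq
      have hsplit : ∀ Sc : Finset V,
          ∑ j, (if j = i then Sc else E j).card =
            Sc.card + ∑ j ∈ Finset.univ.erase i, (if j = i then Sc else E j).card := by
        intro Sc
        rw [← Finset.add_sum_erase Finset.univ _ (Finset.mem_univ i), if_pos rfl]
      rw [hsplit, hsplit] at heq
      have hrest : ∑ j ∈ Finset.univ.erase i, (if j = i then S else E j).card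
          = ∑ j ∈ Finset.univ.erase i, (if j = i then T else E j).card := by
        apply Finset.sum_congr rfl
        intro j hj
        rw [if_neg (Finset.mem_erase.1 hj).1, if_neg (Finset.mem_erase.1 hj).1]
      rw [hrest] at heq
      omega
  · -- backward direction
    rintro ⟨h35, hunm⟩
    intro S T hSmax hTmax
    have hr : ∀ i : Fin n, ∃ r : ℕ, (∀ U, IsMaxIndepIn (Gs i) (B i) U → U.card = r) ∧
        (∀ U, IsMaxIndepIn (Gs i) ((B i).erase (x i)) U → U.card = r) := by
      intro i
      rcases Nat.lt_or_ge (i : ℕ) t with hit | hit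
      · obtain ⟨hl3, hcyi⟩ := hcyc i hit
        obtain ⟨hBsuppi, ⟨e⟩⟩ := hcyi
        haveI : NeZero (ℓ i) := ⟨by omega⟩
        have hBieq : tmap e Finset.univ = B i := tmap_univ e
        have hBeeq : tmap e (Finset.univ.erase (e ⟨x i, hxB i⟩)) = (B i).erase (x i) :=
          tmap_erase e (hxB i)
        rcases h35 i hit with h3 | h5
        · refine ⟨1, fun U hU => ?_, fun U hU => ?_⟩
          · obtain ⟨F, rfl⟩ := tmap_surj e hU.1.1
            have hU' : IsMaxIndepIn (Gs i) (tmap e Finset.univ) (tmap e F) := by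
              rw [hBieq]; exact hU
            rw [tmap_card]
            exact cyc3_card h3 F ((tmap_maxIndep_iff e _ F).1 hU')
          · obtain ⟨F, rfl⟩ := tmap_surj e (hU.1.1.trans (Finset.erase_subset _ _))
            have hU' : IsMaxIndepIn (Gs i)
                (tmap e (Finset.univ.erase (e ⟨x i, hxB i⟩))) (tmap e F) := by
              rw [hBeeq]; exact hU
            rw [tmap_card]
            exact cyc3_card_erase h3 _ F ((tmap_maxIndep_iff e _ F).1 hU')
        · refine ⟨2, fun U hU => ?_, fun U hU => ?_⟩
          · obtain ⟨F, rfl⟩ := tmap_surj e hU.1.1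
            have hU' : IsMaxIndepIn (Gs i) (tmap e Finset.univ) (tmap e F) := by
              rw [hBieq]; exact hU
            rw [tmap_card]
            exact cyc5_card h5 F ((tmap_maxIndep_iff e _ F).1 hU')
          · obtain ⟨F, rfl⟩ := tmap_surj e (hU.1.1.trans (Finset.erase_subset _ _))
            have hU' : IsMaxIndepIn (Gs i)
                (tmap e (Finset.univ.erase (e ⟨x i, hxB i⟩))) (tmap e F) := by
              rw [hBeeq]; exact hU
            rw [tmap_card]
            exact cyc5_card_erase h5 _ F ((tmap_maxIndep_iff e _ F).1 hU')
      · obtain ⟨z, hzB, hzsimp, hzadj⟩ := hsimp i hit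
        obtain ⟨U0, -, hU0⟩ := exists_maxIndep (G := Gs i) (A := B i) (S := (∅ : Finset V))
          ⟨Finset.empty_subset _, fun u hu => absurd hu (Finset.notMem_empty u)⟩
        refine ⟨U0.card, fun U hU => hunm i hit U U0 hU hU0,
          fun U hU => hunm i hit U U0 (erase_max_of_simplicial hzB hzadj hzsimp hU) hU0⟩
    choose r hrB hrE using hr
    have hcard : ∀ U, IsMaxIndepIn (G ⊔ ⨆ i, Gs i) (Finset.univ.biUnion B) U →
        U.card = ∑ i, r i := by
      intro U hU
      have hUsub := hU.1.1
      have hUcard : U.card = ∑ i, (U ∩ B i).card := by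
        have hrepr : U = Finset.univ.biUnion (fun i => U ∩ B i) := by
          ext v
          simp only [Finset.mem_biUnion, Finset.mem_inter, Finset.mem_univ, true_and]
          constructor
          · intro hv
            obtain ⟨i, -, hvB⟩ := Finset.mem_biUnion.1 (hUsub hv)
            exact ⟨i, hv, hvB⟩
          · rintro ⟨i, hv, -⟩; exact hv
        conv_lhs => rw [hrepr]
        exact Finset.card_biUnion (fun a _ b _ hab =>
          (hBdisj a b hab).mono Finset.inter_subset_right Finset.inter_subset_right)
      rw [hUcard]
      apply Finset.sum_congr rfl
      intro i _
      by_cases hxU : x i ∈ U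
      · exact hrB i _ ((decomp_max hxB hBdisj hGsupp hsupp hU i).1 hxU)
      · exact hrE i _ ((decomp_max hxB hBdisj hGsupp hsupp hU i).2 hxU)
    rw [hcard S hSmax, hcard T hTmax]
end
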